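/- If [[A, B], [C, D]] is a real symplectic 2d×2d matrix (i.e. it satisfies SᵀJS = J), then the complex matrix A + iB is invertible. -/

import Mathlib

open Matrix

lemma aux_dot_nonneg (d : ℕ) (v : Fin d → ℝ) : 0 ≤ v ⬝ᵥ v :=
  Finset.sum_nonneg fun i _ => mul_self_nonneg _

lemma aux_unit (d : ℕ) (A B C D : Matrix (Fin d) (Fin d) ℝ)
    (h2 : D * Aᵀ - C * Bᵀ = 1) :
    IsUnit (A * Aᵀ + B * Bᵀ) := by
  rw [← Matrix.mulVec_injective_iff_isUnit]
  have hker : ∀ u : Fin d → ℝ, (A * Aᵀ + B * Bᵀ) *ᵥ u = 0 → u = 0 := by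
    intro u hu
    have key : (Aᵀ *ᵥ u) ⬝ᵥ (Aᵀ *ᵥ u) + (Bᵀ *ᵥ u) ⬝ᵥ (Bᵀ *ᵥ u) = 0 := by
      have h0 : u ⬝ᵥ ((A * Aᵀ + B * Bᵀ) *ᵥ u) = 0 := by rw [hu, dotProduct_zero]
      have e1 : u ⬝ᵥ ((A * Aᵀ) *ᵥ u) = (Aᵀ *ᵥ u) ⬝ᵥ (Aᵀ *ᵥ u) := by
        rw [← Matrix.mulVec_mulVec, dotProduct_mulVec, ← Matrix.mulVec_transpose]
      have e2 : u ⬝ᵥ ((B * Bᵀ) *ᵥ u) = (Bᵀ *ᵥ u) ⬝ᵥ (Bᵀ *ᵥ u) := by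
        rw [← Matrix.mulVec_mulVec, dotProduct_mulVec, ← Matrix.mulVec_transpose]
      rw [add_mulVec, dotProduct_add, e1, e2] at h0
      exact h0
    have hA : Aᵀ *ᵥ u = 0 := by
      rw [← dotProduct_self_eq_zero (v := Aᵀ *ᵥ u)]
      have n1 := aux_dot_nonneg d (Aᵀ *ᵥ u)
      have n2 := aux_dot_nonneg d (Bᵀ *ᵥ u)
      linarith
    have hB : Bᵀ *ᵥ u = 0 := by
      rw [← dotProduct_self_eq_zero (v := Bᵀ *ᵥ u)]
      have n1 := aux_dot_nonneg d (Aᵀ *ᵥ u)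
      have n2 := aux_dot_nonneg d (Bᵀ *ᵥ u)
      linarith
    calc u = (D * Aᵀ - C * Bᵀ) *ᵥ u := by rw [h2, one_mulVec]
    _ = D *ᵥ (Aᵀ *ᵥ u) - C *ᵥ (Bᵀ *ᵥ u) := by
        rw [sub_mulVec, Matrix.mulVec_mulVec, Matrix.mulVec_mulVec]
    _ = 0 := by rw [hA, hB, mulVec_zero, mulVec_zero, sub_zero]
  intro u w h
  have : u - w = 0 := hker (u - w) (by rw [Matrix.mulVec_sub, h, sub_self])
  exact sub_eq_zero.mp this

/-- If [[A,B],[C,D]] is real symplectic then A + iB is invertible. -/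
theorem stmt1 (d : ℕ) (A B C D : Matrix (Fin d) (Fin d) ℝ)
    (hS : (Matrix.fromBlocks A B C D)ᵀ *
        (Matrix.fromBlocks 0 1 (-1) 0 : Matrix (Fin d ⊕ Fin d) (Fin d ⊕ Fin d) ℝ) *
        (Matrix.fromBlocks A B C D) =
      (Matrix.fromBlocks 0 1 (-1) 0 : Matrix (Fin d ⊕ Fin d) (Fin d ⊕ Fin d) ℝ)) :
    IsUnit (A.map (Complex.ofReal) + Complex.I • B.map (Complex.ofReal)) := by
  set S : Matrix (Fin d ⊕ Fin d) (Fin d ⊕ Fin d) ℝ := Matrix.fromBlocks A B C D with hSdef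
  set J : Matrix (Fin d ⊕ Fin d) (Fin d ⊕ Fin d) ℝ := Matrix.fromBlocks 0 1 (-1) 0 with hJdef
  have hone : (1 : Matrix (Fin d ⊕ Fin d) (Fin d ⊕ Fin d) ℝ) = Matrix.fromBlocks 1 0 0 1 :=
    (Matrix.fromBlocks_one).symm
  have hJJ : J * J = -1 := by
    ext (i | i) (j | j) <;>
      simp [hJdef, Matrix.fromBlocks_multiply, Matrix.one_apply]
  have hleft : ((-J) * Sᵀ * J) * S = 1 := by
    have h : (-J) * (Sᵀ * J * S) = (-J) * J := by rw [hS]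
    rw [neg_mul, neg_mul, hJJ, neg_neg] at h
    rw [← h]; noncomm_ring
  have hright : S * ((-J) * Sᵀ * J) = 1 := mul_eq_one_comm.mp hleft
  have hSJS : S * J * Sᵀ = J := by
    have h1 : -(S * J * Sᵀ * J) = 1 := by
      rw [← hright]; noncomm_ring
    have h2 := congrArg (· * J) h1
    rw [neg_mul, Matrix.mul_assoc (S * J * Sᵀ) J J, hJJ, Matrix.one_mul,
      Matrix.mul_neg, Matrix.mul_one, neg_neg] at h2
    exact h2
  have hblocks : S * J * Sᵀ = Matrix.fromBlocks (A * Bᵀ - B * Aᵀ) (A * Dᵀ - B * Cᵀ)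
      (C * Bᵀ - D * Aᵀ) (C * Dᵀ - D * Cᵀ) := by
    rw [hSdef, hJdef, Matrix.fromBlocks_transpose, Matrix.fromBlocks_multiply,
      Matrix.fromBlocks_multiply]
    congr 1 <;> noncomm_ring
  rw [hblocks] at hSJS
  have h1 : A * Bᵀ - B * Aᵀ = 0 := by
    have := congrArg Matrix.toBlocks₁₁ hSJS
    simpa [hJdef, Matrix.toBlocks_fromBlocks₁₁] using this
  have h2 : A * Dᵀ - B * Cᵀ = 1 := by
    have := congrArg Matrix.toBlocks₁₂ hSJS
    simpa [hJdef, Matrix.toBlocks_fromBlocks₁₂] using this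
  have h2' : D * Aᵀ - C * Bᵀ = 1 := by
    have := congrArg Matrix.transpose h2
    simpa [Matrix.transpose_sub, Matrix.transpose_mul] using this
  have hG : IsUnit (A * Aᵀ + B * Bᵀ) := aux_unit d A B C D h2'
  have hGC : IsUnit ((A * Aᵀ + B * Bᵀ).map (Complex.ofReal)) := by
    have := hG.map (Complex.ofRealHom.mapMatrix :
      Matrix (Fin d) (Fin d) ℝ →+* Matrix (Fin d) (Fin d) ℂ).toMonoidHom
    exact this
  have hmap : ∀ X Y : Matrix (Fin d) (Fin d) ℝ,
      (X * Y).map (Complex.ofReal) = X.map Complex.ofReal * Y.map Complex.ofReal := by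
    intro X Y
    exact Matrix.map_mul (f := Complex.ofRealHom)
  have h1C : A.map Complex.ofReal * (Bᵀ).map Complex.ofReal
      = B.map Complex.ofReal * (Aᵀ).map Complex.ofReal := by
    rw [← hmap, ← hmap, sub_eq_zero.mp h1]
  have hprod : (A.map (Complex.ofReal) + Complex.I • B.map (Complex.ofReal)) *
      ((Aᵀ).map (Complex.ofReal) - Complex.I • (Bᵀ).map (Complex.ofReal)) =
      (A * Aᵀ + B * Bᵀ).map (Complex.ofReal) := by
    have expand : (A.map (Complex.ofReal) + Complex.I • B.map (Complex.ofReal)) *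
        ((Aᵀ).map (Complex.ofReal) - Complex.I • (Bᵀ).map (Complex.ofReal)) =
        A.map Complex.ofReal * (Aᵀ).map Complex.ofReal +
          B.map Complex.ofReal * (Bᵀ).map Complex.ofReal +
          (Complex.I • (B.map Complex.ofReal * (Aᵀ).map Complex.ofReal) -
            Complex.I • (A.map Complex.ofReal * (Bᵀ).map Complex.ofReal)) := by
      simp only [mul_sub, add_mul, Matrix.smul_mul, Matrix.mul_smul, smul_smul,
        Complex.I_mul_I, neg_one_smul, smul_sub, smul_add, smul_neg]
      abel
    rw [expand, h1C, sub_self, add_zero,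
      Matrix.map_add Complex.ofReal (fun a b => Complex.ofReal_add a b), hmap, hmap]
  rw [Matrix.isUnit_iff_isUnit_det]
  rw [Matrix.isUnit_iff_isUnit_det, ← hprod, Matrix.det_mul] at hGC
  exact isUnit_of_mul_isUnit_left hGC
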